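/- For a tree T, F_c(T) = F(T) if and only if T is a path. -/

import Mathlib

open SimpleGraph

/-- A vertex is (eventually) colored in the forcing process starting from `S`:
either it is in `S`, or some colored vertex `u` adjacent to it has all of its
other neighbors colored, so `u` forces it. -/
inductive SimpleGraph.Forced {V : Type*} (G : SimpleGraph V) (S : Set V) : V → Prop
  | init {v : V} (hv : v ∈ S) : G.Forced S v
  | force {u w : V} (hu : G.Forced S u) (hadj : G.Adj u w)
      (hothers : ∀ x, G.Adj u x → x ≠ w → G.Forced S x) : G.Forced S w

/-- `S` is a (zero) forcing set of `G`. -/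
def SimpleGraph.IsForcingSet {V : Type*} (G : SimpleGraph V) (S : Set V) : Prop :=
  ∀ v, G.Forced S v

/-- `S` is a connected forcing set of `G`. -/
def SimpleGraph.IsConnForcingSet {V : Type*} (G : SimpleGraph V) (S : Set V) : Prop :=
  G.IsForcingSet S ∧ (G.induce S).Connected

/-- The (zero) forcing number `F(G)`. -/
noncomputable def SimpleGraph.zfNum {V : Type*} (G : SimpleGraph V) : ℕ :=
  sInf {n | ∃ S : Set V, S.ncard = n ∧ G.IsForcingSet S}

/-- The connected forcing number `F_c(G)`. -/
noncomputable def SimpleGraph.czfNum {V : Type*} (G : SimpleGraph V) : ℕ :=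
  sInf {n | ∃ S : Set V, S.ncard = n ∧ G.IsConnForcingSet S}

/-- `G` is a path graph. -/
def SimpleGraph.IsPathGraph {V : Type*} (G : SimpleGraph V) : Prop :=
  ∃ n : ℕ, Nonempty (G ≃g SimpleGraph.pathGraph n)

/-- Deletion of a vertex. -/
def SimpleGraph.delVert {V : Type*} (G : SimpleGraph V) (v : V) :
    SimpleGraph {w : V // w ≠ v} :=
  G.induce {w : V | w ≠ v}

/-- `v` is a leaf (degree-1 vertex) of `G`. -/
def SimpleGraph.IsLeaf {V : Type*} (G : SimpleGraph V) (v : V) : Prop :=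
  (G.neighborSet v).ncard = 1


namespace ZFAux
variable {V : Type*} {T : SimpleGraph V}

lemma forced_mono {S S' : Set V} (h : S ⊆ S') : ∀ {v}, T.Forced S v → T.Forced S' v := by
  intro v hv
  induction hv with
  | init hv => exact .init (h hv)
  | force hu hadj hoth ihu ihoth => exact .force ihu hadj ihoth

lemma forced_trans {S S' : Set V} (h : ∀ s ∈ S, T.Forced S' s) :
    ∀ {v}, T.Forced S v → T.Forced S' v := by
  intro v hv
  induction hv with
  | init hv => exact h _ hv
  | force hu hadj hoth ihu ihoth => exact .force ihu hadj ihoth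

lemma not_forced_empty : ∀ {v : V}, ¬ T.Forced ∅ v := by
  intro v hv
  induction hv with
  | init hv => exact hv
  | force hu hadj hoth ihu ihoth => exact ihu

lemma fort {S F : Set V} (hdisj : ∀ s ∈ S, s ∉ F)
    (hfort : ∀ w f, w ∉ F → f ∈ F → T.Adj w f → ∃ f', f' ∈ F ∧ f' ≠ f ∧ T.Adj w f') :
    ∀ {v}, T.Forced S v → v ∉ F := by
  intro v hv
  induction hv with
  | init hv => exact hdisj _ hv
  | force hu hadj hoth ihu ihoth =>
    intro hwF
    obtain ⟨f', hf'F, hf'ne, hf'adj⟩ := hfort _ _ ihu hwF hadj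
    exact ihoth f' hf'adj hf'ne hf'F

/-- Reachability avoiding a vertex. -/
def RA (T : SimpleGraph V) (x a b : V) : Prop := ∃ w : T.Walk a b, x ∉ w.support

lemma RA.rfl {x a : V} (h : a ≠ x) : RA T x a a :=
  ⟨Walk.nil, by simp [Ne.symm h]⟩

lemma RA.trans {x a b c : V} (h1 : RA T x a b) (h2 : RA T x b c) : RA T x a c := by
  obtain ⟨p, hp⟩ := h1; obtain ⟨q, hq⟩ := h2
  exact ⟨p.append q, by rw [Walk.mem_support_append_iff]; tauto⟩

lemma RA.symm {x a b : V} (h : RA T x a b) : RA T x b a := by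
  obtain ⟨p, hp⟩ := h
  exact ⟨p.reverse, by rwa [Walk.support_reverse, List.mem_reverse]⟩

lemma RA.adj {x a b : V} (h : T.Adj a b) (hxa : x ≠ a) (hxb : x ≠ b) : RA T x a b :=
  ⟨h.toWalk, by simp [hxa, hxb]⟩

lemma no_two_branches (hac : T.IsAcyclic) {x b c : V} (hb : T.Adj x b) (hc : T.Adj x c)
    (hbc : b ≠ c) (h : RA T x b c) : False := by
  obtain ⟨w, hw⟩ := h
  have hbridge := (isAcyclic_iff_forall_adj_isBridge.mp hac) hb
  rw [isBridge_iff_adj_and_forall_walk_mem_edges] at hbridge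
  have hmem := hbridge (Walk.cons hc w.reverse)
  rw [Walk.edges_cons, List.mem_cons] at hmem
  rcases hmem with h1 | h1
  · exact hbc (Sym2.congr_right.mp h1)
  · refine hw ?_
    have := Walk.fst_mem_support_of_mem_edges _ h1
    rwa [Walk.support_reverse, List.mem_reverse] at this

lemma RA.not_two (hac : T.IsAcyclic) {x q b c : V} (hb : T.Adj x b) (hc : T.Adj x c)
    (hbc : b ≠ c) (h1 : RA T x q b) (h2 : RA T x q c) : False :=
  no_two_branches hac hb hc hbc (h1.symm.trans h2)

lemma master {S : Set V} (hforce : T.IsForcingSet S) {x b c : V}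
    (hb : T.Adj x b) (hc : T.Adj x c) (hbc : b ≠ c)
    (hS : ∀ s ∈ S, ¬ RA T x b s ∧ ¬ RA T x c s) : False := by
  set F : Set V := {w | w ≠ x ∧ (RA T x b w ∨ RA T x c w)} with hF
  have hbF : b ∈ F := ⟨hb.ne', Or.inl (RA.rfl hb.ne')⟩
  refine fort (S := S) (F := F) ?_ ?_ (hforce b) hbF
  · intro s hs hsF
    rcases hsF.2 with h | h
    exacts [(hS s hs).1 h, (hS s hs).2 h]
  · intro w f hwF hfF hadj
    by_cases hwx : w = x
    · subst hwx
      by_cases hfb : f = b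
      · exact ⟨c, ⟨hc.ne', Or.inr (RA.rfl hc.ne')⟩, by rw [hfb]; exact hbc.symm, hc⟩
      · exact ⟨b, hbF, fun h => hfb h.symm, hb⟩
    · refine absurd ?_ hwF
      refine ⟨hwx, hfF.2.imp ?_ ?_⟩ <;>
        exact fun h => h.trans (RA.adj hadj.symm (Ne.symm hfF.1) (Ne.symm hwx))

lemma exists_walk_mem {S : Set V} (hconn : (T.induce S).Connected) {a b : V}
    (ha : a ∈ S) (hb : b ∈ S) : ∃ w : T.Walk a b, ∀ z ∈ w.support, z ∈ S := by
  obtain ⟨p⟩ := hconn.preconnected ⟨a, ha⟩ ⟨b, hb⟩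
  refine ⟨p.map (Embedding.induce S).toHom, ?_⟩
  intro z hz
  change z ∈ (p.map (Embedding.induce S).toHom).support at hz; rw [Walk.support_map] at hz
  obtain ⟨y, -, rfl⟩ := List.mem_map.mp hz
  exact y.2


open Classical in
noncomputable def nxt (T : SimpleGraph V) (prev cur : V) : V :=
  if h : ∃ w, T.Adj cur w ∧ w ≠ prev then h.choose else cur

noncomputable def chAux (T : SimpleGraph V) (a b : V) : ℕ → V × V
  | 0 => (a, b)
  | n+1 => ((chAux T a b n).2, nxt T (chAux T a b n).1 (chAux T a b n).2)

noncomputable def ch (T : SimpleGraph V) (a b : V) (n : ℕ) : V := (chAux T a b n).1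

@[simp] lemma ch_zero (a b : V) : ch T a b 0 = a := rfl
@[simp] lemma ch_one (a b : V) : ch T a b 1 = b := rfl
lemma ch_succ_succ (a b : V) (n : ℕ) :
    ch T a b (n+2) = nxt T (ch T a b n) (ch T a b (n+1)) := rfl

def Stalled (T : SimpleGraph V) (a b : V) (n : ℕ) : Prop :=
  ¬ ∃ w, T.Adj (ch T a b (n+1)) w ∧ w ≠ ch T a b n

lemma ch_spec {a b : V} {n : ℕ} (h : ¬ Stalled T a b n) :
    T.Adj (ch T a b (n+1)) (ch T a b (n+2)) ∧ ch T a b (n+2) ≠ ch T a b n := by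
  rw [Stalled, not_not] at h
  rw [ch_succ_succ, nxt, dif_pos h]
  exact h.choose_spec

def Inv (T : SimpleGraph V) (Ok : Set V) (a b : V) (n : ℕ) : Prop :=
  (∀ k, k ≤ n → T.Adj (ch T a b k) (ch T a b (k+1))) ∧
  (∀ i j, i ≤ n+1 → j ≤ n+1 → ch T a b i = ch T a b j → i = j) ∧
  (∀ k, 1 ≤ k → k ≤ n+1 → ch T a b k ∈ Ok)

lemma chain_walk (a b : V) : ∀ (n : ℕ), (∀ k, k ≤ n → T.Adj (ch T a b k) (ch T a b (k+1))) →
    ∃ w : T.Walk a (ch T a b (n+1)),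
      (∀ z ∈ w.support, ∃ i, i ≤ n+1 ∧ ch T a b i = z) ∧
      (∀ e ∈ w.edges, ∃ i, i ≤ n ∧ e = s(ch T a b i, ch T a b (i+1)))
  | 0, h => by
    refine ⟨(h 0 le_rfl).toWalk, ?_, ?_⟩
    · intro z hz
      change z ∈ (h 0 le_rfl).toWalk.support at hz; simp only [Adj.support_toWalk, Walk.support_cons, Walk.support_nil, List.mem_cons,
        List.mem_singleton, List.not_mem_nil, or_false] at hz
      rcases hz with rfl | rfl
      · exact ⟨0, by omega, rfl⟩
      · exact ⟨1, by omega, rfl⟩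
    · intro e he
      change e ∈ (h 0 le_rfl).toWalk.edges at he; simp only [Adj.edges_toWalk, Walk.edges_cons, Walk.edges_nil, List.mem_singleton] at he
      exact ⟨0, le_rfl, he⟩
  | n+1, h => by
    obtain ⟨w, hsupp, hedge⟩ := chain_walk a b n (fun k hk => h k (by omega))
    refine ⟨w.concat (h (n+1) le_rfl), ?_, ?_⟩
    · intro z hz
      rw [Walk.support_concat, List.mem_append] at hz
      rcases hz with hz | hz
      · obtain ⟨i, hi, hiz⟩ := hsupp z hz; exact ⟨i, by omega, hiz⟩
      · exact ⟨n+2, le_rfl, (List.mem_singleton.mp hz).symm⟩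
    · intro e he
      rw [Walk.edges_concat, List.concat_eq_append, List.mem_append] at he
      rcases he with he | he
      · obtain ⟨i, hi, hie⟩ := hedge e he; exact ⟨i, by omega, hie⟩
      · exact ⟨n+1, le_rfl, List.mem_singleton.mp he⟩

section ChainInv

variable {Ok : Set V} {a b v' : V}

lemma chain_inv
    (hab : T.Adj a b) (hbOk : b ∈ Ok) (hv' : v' ∉ Ok ∨ v' = b)
    (ha_nbrs : ∀ x, T.Adj a x → x = b ∨ x = v')
    (hthree : ∀ x ∈ Ok, ∀ p q r, T.Adj x p → T.Adj x q → T.Adj x r → p = q ∨ p = r ∨ q = r)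
    (hclose : ∀ x y, x ∈ Ok → T.Adj x y → y ∉ Ok → y ≠ a →
      (∃ w : T.Walk a x, y ∉ w.support ∧ s(x, y) ∉ w.edges) → False) :
    ∀ n, (∀ k, k < n → ¬ Stalled T a b k) → Inv T Ok a b n := by
  intro n
  induction n with
  | zero =>
    intro _
    refine ⟨?_, ?_, ?_⟩
    · intro k hk
      interval_cases k
      simpa using hab
    · intro i j hi hj hij
      have key : ∀ i' j', i' ≤ 1 → j' ≤ 1 → ch T a b i' = ch T a b j' → i' ≤ j' → i' = j' := by
        intro i' j' hi' hj' hij' hle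
        interval_cases i' <;> interval_cases j' <;>
          first
          | rfl
          | exact absurd hij' hab.ne
          | omega
      rcases le_or_gt i j with hle | hlt
      · exact key i j hi hj hij hle
      · exact (key j i hj hi hij.symm (by omega)).symm
    · intro k h1 h2
      interval_cases k
      simpa using hbOk
  | succ n ihn =>
    intro hns
    obtain ⟨hadj, hinj, hok⟩ := ihn (fun k hk => hns k (by omega))
    obtain ⟨hadj2, hne2⟩ := ch_spec (hns n (by omega))
    have halpha : ch T a b (n+2) ≠ a := by
      intro heq
      have hadja : T.Adj a (ch T a b (n+1)) := by
        have h' := hadj2.symm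
        rwa [heq] at h'
      have hOkn1 : ch T a b (n+1) ∈ Ok := hok (n+1) (by omega) (by omega)
      have hcb : ch T a b (n+1) = b := by
        rcases ha_nbrs _ hadja with hcb | hcv
        · exact hcb
        · rcases hv' with h | h
          · exact absurd (hcv ▸ hOkn1) h
          · rw [hcv, h]
      have h1 : n + 1 = 1 := hinj (n+1) 1 (by omega) (by omega) (by rw [hcb]; rfl)
      have hn0 : n = 0 := by omega
      subst hn0
      exact hne2 (by rw [heq]; rfl)
    have hbeta : ch T a b (n+2) ∈ Ok := by
      by_contra hno
      obtain ⟨w, hsupp, hedge⟩ := chain_walk a b n hadj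
      refine hclose (ch T a b (n+1)) (ch T a b (n+2)) (hok _ (by omega) (by omega))
        hadj2 hno halpha ⟨w, ?_, ?_⟩
      · intro hmem
        obtain ⟨i, hi, hieq⟩ := hsupp _ hmem
        rcases Nat.eq_zero_or_pos i with rfl | hipos
        · exact halpha (by rw [← hieq]; rfl)
        · exact hno (hieq ▸ hok i hipos hi)
      · intro hmem
        obtain ⟨i, hi, hieq⟩ := hedge _ hmem
        rw [Sym2.eq_iff] at hieq
        rcases hieq with ⟨h1, h2⟩ | ⟨h1, h2⟩
        · have := hinj (n+1) i (by omega) (by omega) h1; omega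
        · have hni := hinj (n+1) (i+1) (by omega) (by omega) h1
          have hin : i = n := by omega
          rw [hin] at h2
          exact hne2 h2
    have hnew : ∀ i, i ≤ n + 1 → ch T a b (n+2) ≠ ch T a b i := by
      intro i hi heq
      rcases Nat.eq_zero_or_pos i with rfl | hipos
      · exact halpha heq
      · rcases Nat.eq_or_lt_of_le hi with hieq | hilt
        · subst hieq
          exact hadj2.ne' heq
        · obtain ⟨i', rfl⟩ : ∃ i', i = i' + 1 := ⟨i - 1, by omega⟩
          have hiOk := hok (i'+1) (by omega) (by omega)
          have hnbr : T.Adj (ch T a b (i'+1)) (ch T a b (n+1)) := by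
            have h' := hadj2.symm
            rwa [heq] at h'
          rcases hthree _ hiOk (ch T a b (n+1)) (ch T a b i') (ch T a b (i'+2)) hnbr
              (hadj i' (by omega)).symm (hadj (i'+1) (by omega)) with h|h|h
          · have := hinj (n+1) i' (by omega) (by omega) h; omega
          · have := hinj (n+1) (i'+2) (by omega) (by omega) h
            have hin : i' + 1 = n := by omega
            rw [hin] at heq
            exact hne2 heq
          · have := hinj i' (i'+2) (by omega) (by omega) h; omega
    refine ⟨?_, ?_, ?_⟩
    · intro k hk
      rcases Nat.lt_or_ge k (n+1) with h | h
      · exact hadj k (by omega)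
      · have hk' : k = n+1 := by omega
        subst hk'; exact hadj2
    · intro i j hi hj hij
      rcases Nat.lt_or_ge i (n+2) with hi' | hi' <;> rcases Nat.lt_or_ge j (n+2) with hj' | hj'
      · exact hinj i j (by omega) (by omega) hij
      · have : j = n+2 := by omega
        subst this
        exact absurd hij.symm (hnew i (by omega))
      · have : i = n+2 := by omega
        subst this
        exact absurd hij (hnew j (by omega))
      · omega
    · intro k h1 h2
      rcases Nat.lt_or_ge k (n+2) with h | h
      · exact hok k h1 (by omega)
      · have hk' : k = n+2 := by omega
        subst hk'; exact hbeta

lemma exists_stall [Finite V]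
    (hab : T.Adj a b) (hbOk : b ∈ Ok) (hv' : v' ∉ Ok ∨ v' = b)
    (ha_nbrs : ∀ x, T.Adj a x → x = b ∨ x = v')
    (hthree : ∀ x ∈ Ok, ∀ p q r, T.Adj x p → T.Adj x q → T.Adj x r → p = q ∨ p = r ∨ q = r)
    (hclose : ∀ x y, x ∈ Ok → T.Adj x y → y ∉ Ok → y ≠ a →
      (∃ w : T.Walk a x, y ∉ w.support ∧ s(x, y) ∉ w.edges) → False) :
    ∃ m, Inv T Ok a b m ∧ Stalled T a b m := by
  classical
  cases nonempty_fintype V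
  have hex : ∃ n, Stalled T a b n := by
    by_contra hno
    push_neg at hno
    have inv := chain_inv hab hbOk hv' ha_nbrs hthree hclose (Fintype.card V)
      (fun k _ => hno k)
    have hinj : Function.Injective (fun i : Fin (Fintype.card V + 2) => ch T a b i.val) := by
      intro i j hij
      have hi := i.isLt; have hj := j.isLt
      exact Fin.ext (inv.2.1 i j (by omega) (by omega) hij)
    have := Fintype.card_le_of_injective _ hinj
    rw [Fintype.card_fin] at this
    omega
  refine ⟨Nat.find hex, chain_inv hab hbOk hv' ha_nbrs hthree hclose _
    (fun k hk => Nat.find_min hex hk), Nat.find_spec hex⟩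

lemma chain_forced {m : ℕ}
    (hinv : Inv T Ok a b m) (hstall : Stalled T a b m)
    (hthree : ∀ x ∈ Ok, ∀ p q r, T.Adj x p → T.Adj x q → T.Adj x r → p = q ∨ p = r ∨ q = r) :
    ∀ k, k ≤ m + 1 → T.Forced {ch T a b (m+1)} (ch T a b k) := by
  obtain ⟨hadj, hinj, hok⟩ := hinv
  have key : ∀ d k, k + d = m + 1 → T.Forced {ch T a b (m+1)} (ch T a b k) := by
    intro d
    induction d using Nat.strong_induction_on with
    | _ d ih =>
      intro k hk
      rcases d with - | d
      · have : k = m + 1 := by omega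
        subst this
        exact .init rfl
      · have hF1 : T.Forced {ch T a b (m+1)} (ch T a b (k+1)) := ih d (by omega) (k+1) (by omega)
        refine .force hF1 (hadj k (by omega)).symm ?_
        intro x hx hxne
        by_cases hkm : k + 1 = m + 1
        · exfalso
          refine hstall ⟨x, ?_, ?_⟩
          · rwa [← hkm]
          · have hkm' : k = m := by omega
            rwa [← hkm']
        · have hOk := hok (k+1) (by omega) (by omega)
          rcases hthree _ hOk x (ch T a b k) (ch T a b (k+2)) hx (hadj k (by omega)).symm
              (hadj (k+1) (by omega)) with h|h|h
          · exact absurd h hxne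
          · rw [h]
            exact ih (d-1) (by omega) (k+2) (by omega)
          · exact absurd (hinj k (k+2) (by omega) (by omega) h) (by omega)
  intro k hk
  exact key (m+1-k) k (by omega)

end ChainInv

lemma no_RA_to_S (hac : T.IsAcyclic) {S : Set V} (hconn : (T.induce S).Connected)
    {u y s : V} (hu : u ∈ S) (hy : y ∉ S) (hadj : T.Adj u y) (hs : s ∈ S) :
    ¬ RA T u y s := by
  rintro ⟨w, hw⟩
  obtain ⟨q, hq⟩ := exists_walk_mem hconn hs hu
  have hbridge := (isAcyclic_iff_forall_adj_isBridge.mp hac) hadj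
  rw [isBridge_iff_adj_and_forall_walk_mem_edges] at hbridge
  have hmem := hbridge ((w.append q).reverse)
  rw [Walk.edges_reverse, List.mem_reverse, Walk.edges_append, List.mem_append] at hmem
  rcases hmem with h | h
  · exact hw (Walk.fst_mem_support_of_mem_edges _ h)
  · exact hy (hq _ (Walk.snd_mem_support_of_mem_edges _ h))

lemma RA.through_S {S : Set V} (hconn : (T.induce S).Connected) {x nb s u : V}
    (hx : x ∉ S) (hs : s ∈ S) (hu : u ∈ S) (h : RA T x nb s) : RA T x nb u := by
  obtain ⟨q, hq⟩ := exists_walk_mem hconn hs hu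
  exact h.trans ⟨q, fun hmem => hx (hq _ hmem)⟩

lemma no_three_outside (hac : T.IsAcyclic) {S : Set V} (hforce : T.IsForcingSet S)
    (hconn : (T.induce S).Connected) {u₀ : V} (hu₀ : u₀ ∈ S)
    {x : V} (hx : x ∉ S) (p q r : V) (hp : T.Adj x p) (hq : T.Adj x q) (hr : T.Adj x r) :
    p = q ∨ p = r ∨ q = r := by
  by_contra hcon
  push_neg at hcon
  obtain ⟨hpq, hpr, hqr⟩ := hcon
  have key : ∀ y z, T.Adj x y → T.Adj x z → y ≠ z → ¬ RA T x u₀ y → ¬ RA T x u₀ z → False := by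
    intro y z hy hz hyz hny hnz
    refine master hforce hy hz hyz ?_
    intro s hs
    exact ⟨fun h => hny (h.through_S hconn hx hs hu₀).symm,
           fun h => hnz (h.through_S hconn hx hs hu₀).symm⟩
  by_cases h1 : RA T x u₀ p
  · exact key q r hq hr hqr (fun h2 => RA.not_two hac hp hq hpq h1 h2)
      (fun h2 => RA.not_two hac hp hr hpr h1 h2)
  · by_cases h2 : RA T x u₀ q
    · exact key p r hp hr hpr h1 (fun h3 => RA.not_two hac hq hr hqr h2 h3)
    · exact key p q hp hq hpq h1 h2

lemma unique_outside (hac : T.IsAcyclic) {S : Set V} (hforce : T.IsForcingSet S)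
    (hconn : (T.induce S).Connected) {u : V} (hu : u ∈ S)
    {p x : V} (hp : p ∉ S) (hap : T.Adj u p) (hx : x ∉ S) (hax : T.Adj u x) : x = p := by
  by_contra hne
  refine master hforce hax hap hne ?_
  intro s hs
  exact ⟨fun h => no_RA_to_S hac hconn hu hx hax hs h,
         fun h => no_RA_to_S hac hconn hu hp hap hs h⟩

lemma shrink [Finite V] (hT : T.IsTree) {S : Set V} (hf : T.IsForcingSet S)
    (hconn : (T.induce S).Connected) {u v : V} (hu : u ∈ S) (hv : v ∈ S) (huv : T.Adj u v)
    (hleaf : ∀ w ∈ S, T.Adj u w → w = v) :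
    ∃ t, T.Forced {t} u ∧ T.Forced {t} v := by
  classical
  by_cases hout : ∃ p, p ∉ S ∧ T.Adj u p
  · obtain ⟨p, hpS, hup⟩ := hout
    set Ok : Set V := {x | x ∉ S} with hOk
    have hthree : ∀ x ∈ Ok, ∀ p' q' r',
        T.Adj x p' → T.Adj x q' → T.Adj x r' → p' = q' ∨ p' = r' ∨ q' = r' :=
      fun x hx p' q' r' h1 h2 h3 =>
        no_three_outside hT.IsAcyclic hf hconn hu hx p' q' r' h1 h2 h3
    have ha_nbrs : ∀ x, T.Adj u x → x = p ∨ x = v := by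
      intro x hx
      by_cases hxS : x ∈ S
      · exact Or.inr (hleaf x hxS hx)
      · exact Or.inl (unique_outside hT.IsAcyclic hf hconn hu hpS hup hxS hx)
    have hclose : ∀ x y, x ∈ Ok → T.Adj x y → y ∉ Ok → y ≠ u →
        (∃ w : T.Walk u x, y ∉ w.support ∧ s(x, y) ∉ w.edges) → False := by
      rintro x y hxOk hxy hyOk hyu ⟨w, hysupp, hedge⟩
      have hyS : y ∈ S := not_not.mp hyOk
      obtain ⟨q, hq⟩ := exists_walk_mem hconn hyS hu
      have hbridge := (isAcyclic_iff_forall_adj_isBridge.mp hT.IsAcyclic) hxy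
      rw [isBridge_iff_adj_and_forall_walk_mem_edges] at hbridge
      have hmem := hbridge (w.reverse.append q.reverse)
      rw [Walk.edges_append, List.mem_append, Walk.edges_reverse, List.mem_reverse,
        Walk.edges_reverse, List.mem_reverse] at hmem
      rcases hmem with h | h
      · exact hedge h
      · exact hxOk (hq _ (Walk.fst_mem_support_of_mem_edges _ h))
    obtain ⟨m, hinv, hstall⟩ := exists_stall hup (show p ∈ Ok from hpS)
      (Or.inl (show v ∉ Ok from not_not_intro hv)) ha_nbrs hthree hclose
    have hforced := chain_forced hinv hstall hthree
    have hFu : T.Forced {ch T u p (m+1)} u := by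
      have := hforced 0 (by omega)
      rwa [ch_zero] at this
    refine ⟨ch T u p (m+1), hFu, ?_⟩
    refine .force hFu huv ?_
    intro x hx hxv
    rcases ha_nbrs x hx with rfl | rfl
    · have := hforced 1 (by omega)
      rwa [ch_one] at this
    · exact absurd rfl hxv
  · push_neg at hout
    refine ⟨u, .init rfl, ?_⟩
    refine .force (.init rfl) huv ?_
    intro x hx hxv
    by_cases hxS : x ∈ S
    · exact absurd (hleaf x hxS hx) hxv
    · exact absurd hx (hout x hxS)

lemma exists_induced_leaf [Fintype V] (hac : T.IsAcyclic) {S : Set V}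
    (hconn : (T.induce S).Connected) (h2 : 2 ≤ S.ncard) :
    ∃ u v, u ∈ S ∧ v ∈ S ∧ T.Adj u v ∧ ∀ w ∈ S, T.Adj u w → w = v := by
  classical
  have htree : (T.induce S).IsTree := by
    refine ⟨hconn, ?_⟩
    intro x c hc
    exact hac (c.map (Embedding.induce (G := T) S).toHom)
      (hc.map (Embedding.induce (G := T) S).injective)
  have hcard : 2 ≤ Fintype.card S := by
    rwa [← Nat.card_coe_set_eq, Nat.card_eq_fintype_card] at h2
  have hedge := htree.card_edgeFinset
  obtain ⟨x, hx⟩ : ∃ x : S, (T.induce S).degree x = 1 := by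
    by_contra hno
    push_neg at hno
    have hall : ∀ x : S, 2 ≤ (T.induce S).degree x := by
      intro x
      have h1 := hno x
      have hpos : 0 < (T.induce S).degree x := by
        rw [degree_pos_iff_exists_adj]
        obtain ⟨y, hy⟩ := Fintype.exists_ne_of_one_lt_card (by omega) x
        obtain ⟨w⟩ := hconn.preconnected x y
        cases w with
        | nil => exact absurd rfl hy
        | cons h p => exact ⟨_, h⟩
      omega
    have hsum := SimpleGraph.sum_degrees_eq_twice_card_edges (T.induce S)
    have hbig : 2 * Fintype.card S ≤ ∑ v, (T.induce S).degree v := by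
      calc 2 * Fintype.card S = ∑ _v : S, 2 := by
            rw [Finset.sum_const, Finset.card_univ]; ring
        _ ≤ _ := Finset.sum_le_sum (fun i _ => hall i)
    rw [hsum] at hbig
    omega
  obtain ⟨y, hy⟩ := Finset.card_eq_one.mp hx
  refine ⟨x, y, x.2, y.2, ?_, ?_⟩
  · have hmem : (y : S) ∈ (T.induce S).neighborFinset x := by
      rw [hy]; exact Finset.mem_singleton_self _
    exact ((T.induce S).mem_neighborFinset x y).mp hmem
  · intro w hw hadj
    have hmem : (⟨w, hw⟩ : S) ∈ (T.induce S).neighborFinset x :=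
      (((T.induce S).mem_neighborFinset x ⟨w, hw⟩).mpr hadj)
    rw [hy, Finset.mem_singleton] at hmem
    exact congrArg Subtype.val hmem

lemma exists_smaller [Fintype V] (hT : T.IsTree) {S : Set V} (hf : T.IsForcingSet S)
    (hconn : (T.induce S).Connected) (h2 : 2 ≤ S.ncard) :
    ∃ S' : Set V, T.IsForcingSet S' ∧ S'.ncard < S.ncard := by
  obtain ⟨u, v, hu, hv, huv, hleaf⟩ := exists_induced_leaf hT.IsAcyclic hconn h2
  obtain ⟨t, htu, htv⟩ := shrink hT hf hconn hu hv huv hleaf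
  have hsingsub : ({t} : Set V) ⊆ insert t (S \ {u, v}) :=
    Set.singleton_subset_iff.mpr (Set.mem_insert _ _)
  refine ⟨insert t (S \ {u, v}), ?_, ?_⟩
  · intro x
    refine forced_trans ?_ (hf x)
    intro s hs
    by_cases hsu : s = u
    · exact hsu ▸ forced_mono hsingsub htu
    · by_cases hsv : s = v
      · exact hsv ▸ forced_mono hsingsub htv
      · exact .init (Set.mem_insert_of_mem _ ⟨hs, by simp [hsu, hsv]⟩)
  · have hsub : ({u, v} : Set V) ⊆ S := by
      rintro z (rfl | rfl) <;> assumption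
    have hdiff : (S \ {u, v}).ncard = S.ncard - 2 := by
      rw [Set.ncard_diff hsub, Set.ncard_pair huv.ne]
    calc (insert t (S \ {u, v})).ncard ≤ (S \ {u, v}).ncard + 1 := Set.ncard_insert_le _ _
      _ < S.ncard := by omega


lemma singleton_path [Finite V] (hT : T.IsTree) {v₀ : V} (hf : T.IsForcingSet {v₀}) :
    (∃ n : ℕ, Nonempty (T ≃g SimpleGraph.pathGraph n)) := by
  classical
  have hdeg : ∀ x y, T.Adj v₀ x → T.Adj v₀ y → x = y := by
    intro x y hx hy
    by_contra hne
    refine master hf hx hy hne ?_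
    intro s hs
    rw [Set.mem_singleton_iff] at hs; subst hs
    exact ⟨fun ⟨w, hw⟩ => hw w.end_mem_support, fun ⟨w, hw⟩ => hw w.end_mem_support⟩
  by_cases hb : ∃ b, T.Adj v₀ b
  · obtain ⟨b, hvb⟩ := hb
    set Ok : Set V := {x | x ≠ v₀} with hOkdef
    have hthree : ∀ x ∈ Ok, ∀ p q r,
        T.Adj x p → T.Adj x q → T.Adj x r → p = q ∨ p = r ∨ q = r := by
      intro x hx p q r hp hq hr
      by_contra hcon
      push_neg at hcon
      obtain ⟨hpq, hpr, hqr⟩ := hcon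
      have key : ∀ y z, T.Adj x y → T.Adj x z → y ≠ z →
          ¬ RA T x v₀ y → ¬ RA T x v₀ z → False := by
        intro y z hy hz hyz hny hnz
        refine master hf hy hz hyz ?_
        intro s hs
        rw [Set.mem_singleton_iff] at hs; subst hs
        exact ⟨fun h => hny h.symm, fun h => hnz h.symm⟩
      by_cases h1 : RA T x v₀ p
      · exact key q r hq hr hqr (fun h2 => RA.not_two hT.IsAcyclic hp hq hpq h1 h2)
          (fun h2 => RA.not_two hT.IsAcyclic hp hr hpr h1 h2)
      · by_cases h2 : RA T x v₀ q
        · exact key p r hp hr hpr h1 (fun h3 => RA.not_two hT.IsAcyclic hq hr hqr h2 h3)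
        · exact key p q hp hq hpq h1 h2
    have ha_nbrs : ∀ x, T.Adj v₀ x → x = b ∨ x = b := fun x hx => Or.inl (hdeg x b hx hvb)
    have hclose : ∀ x y, x ∈ Ok → T.Adj x y → y ∉ Ok → y ≠ v₀ →
        (∃ w : T.Walk v₀ x, y ∉ w.support ∧ s(x, y) ∉ w.edges) → False := by
      intro x y _ _ hyOk hyv _
      exact hyv (not_not.mp hyOk)
    obtain ⟨m, hinv, hstall⟩ := exists_stall hvb (show b ∈ Ok from hvb.ne') (Or.inr rfl)
      ha_nbrs hthree hclose
    obtain ⟨hadj, hinj, hok⟩ := hinv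
    have hstep : ∀ w1 w2, (∃ i, i ≤ m+1 ∧ ch T v₀ b i = w1) → T.Adj w1 w2 →
        ∃ j, j ≤ m+1 ∧ ch T v₀ b j = w2 := by
      rintro w1 w2 ⟨i, hi, rfl⟩ hadj12
      rcases Nat.eq_zero_or_pos i with rfl | hipos
      · refine ⟨1, by omega, ?_⟩
        rw [ch_one]
        rw [ch_zero] at hadj12
        exact (hdeg w2 b hadj12 hvb).symm
      · rcases Nat.eq_or_lt_of_le hi with heq | hlt
        · subst heq
          have hw2 : w2 = ch T v₀ b m := by
            by_contra hne
            exact hstall ⟨w2, hadj12, hne⟩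
          exact ⟨m, by omega, hw2.symm⟩
        · obtain ⟨i', rfl⟩ : ∃ i', i = i' + 1 := ⟨i - 1, by omega⟩
          rcases hthree _ (hok (i'+1) (by omega) (by omega)) w2 (ch T v₀ b i')
              (ch T v₀ b (i'+2)) hadj12 (hadj i' (by omega)).symm
              (hadj (i'+1) (by omega)) with h|h|h
          · exact ⟨i', by omega, h.symm⟩
          · exact ⟨i'+2, by omega, h.symm⟩
          · exact absurd (hinj i' (i'+2) (by omega) (by omega) h) (by omega)
    have hcov : ∀ w, ∃ i, i ≤ m+1 ∧ ch T v₀ b i = w := by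
      intro w
      obtain ⟨p⟩ := hT.isConnected.preconnected v₀ w
      have hgen : ∀ (z w' : V) (p : T.Walk z w'), (∃ i, i ≤ m+1 ∧ ch T v₀ b i = z) →
          ∃ j, j ≤ m+1 ∧ ch T v₀ b j = w' := by
        intro z w' p
        induction p with
        | nil => exact id
        | cons h q ih => intro hz; exact ih (hstep _ _ hz h)
      exact hgen _ _ p ⟨0, by omega, ch_zero _ _⟩
    have hbij : Function.Bijective (fun i : Fin (m+2) => ch T v₀ b i.val) := by
      constructor
      · intro i j hij
        have hi := i.isLt; have hj := j.isLt
        exact Fin.ext (hinj i j (by omega) (by omega) hij)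
      · intro w
        obtain ⟨i, hi, hiw⟩ := hcov w
        exact ⟨⟨i, by omega⟩, hiw⟩
    have hadjiff : ∀ i j : Fin (m+2),
        T.Adj (ch T v₀ b i.val) (ch T v₀ b j.val) ↔ (pathGraph (m+2)).Adj i j := by
      intro i j
      rw [pathGraph_adj]
      have hi := i.isLt; have hj := j.isLt
      constructor
      · intro h
        rcases Nat.eq_zero_or_pos i.val with h0 | hipos
        · have hjb : ch T v₀ b j.val = b := by
            rw [h0, ch_zero] at h
            exact hdeg _ b h hvb
          have hj1 : j.val = 1 := hinj j.val 1 (by omega) (by omega) (by rw [hjb, ch_one])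
          omega
        · rcases Nat.eq_or_lt_of_le (show i.val ≤ m+1 by omega) with heq | hlt
          · have hjm : ch T v₀ b j.val = ch T v₀ b m := by
              by_contra hne
              refine hstall ⟨ch T v₀ b j.val, ?_, hne⟩
              rw [← heq]; exact h
            have := hinj j.val m (by omega) (by omega) hjm
            omega
          · obtain ⟨i', hi'⟩ : ∃ i', i.val = i' + 1 := ⟨i.val - 1, by omega⟩
            have hx : ch T v₀ b i.val ∈ Ok := hok i.val (by omega) (by omega)
            have ha1 : T.Adj (ch T v₀ b i.val) (ch T v₀ b i') := by
              rw [hi']; exact (hadj i' (by omega)).symm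
            have ha2 : T.Adj (ch T v₀ b i.val) (ch T v₀ b (i'+2)) := by
              rw [hi']; exact hadj (i'+1) (by omega)
            rcases hthree _ hx (ch T v₀ b j.val) (ch T v₀ b i') (ch T v₀ b (i'+2))
                h ha1 ha2 with hcase|hcase|hcase
            · have := hinj j.val i' (by omega) (by omega) hcase
              omega
            · have := hinj j.val (i'+2) (by omega) (by omega) hcase
              omega
            · exact absurd (hinj i' (i'+2) (by omega) (by omega) hcase) (by omega)
      · intro h
        rcases h with h | h
        · have hadj' := hadj i.val (by omega)
          rw [show i.val + 1 = j.val from h] at hadj'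
          exact hadj'
        · have hadj' := hadj j.val (by omega)
          rw [show j.val + 1 = i.val from h] at hadj'
          exact hadj'.symm
    refine ⟨m+2, ⟨?_⟩⟩
    exact (SimpleGraph.Iso.symm
      { toEquiv := Equiv.ofBijective _ hbij,
        map_rel_iff' := by intro i j; exact hadjiff i j })
  · push_neg at hb
    have hall : ∀ w : V, w = v₀ := by
      intro w
      obtain ⟨p⟩ := hT.isConnected.preconnected v₀ w
      cases p with
      | nil => rfl
      | cons h q => exact absurd h (hb _)
    refine ⟨1, ⟨?_⟩⟩
    refine { toEquiv := ⟨fun _ => (0 : Fin 1), fun _ => v₀, fun x => (hall x).symm,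
      fun i => Subsingleton.elim _ _⟩, map_rel_iff' := ?_ }
    intro a b'
    simp only [Equiv.coe_fn_mk, pathGraph_adj]
    constructor
    · intro h
      omega
    · intro h
      rw [hall a, hall b'] at h
      exact absurd h (T.loopless.irrefl v₀)


end ZFAux

theorem tree_forcing_eq_connected_forcing_iff_path {V : Type*} [Fintype V]
    (T : SimpleGraph V) (hT : T.IsTree) :
    T.czfNum = T.zfNum ↔ T.IsPathGraph := by
  classical
  have hne : Nonempty V := hT.isConnected.nonempty
  have hzf_ne : {n | ∃ S : Set V, S.ncard = n ∧ T.IsForcingSet S}.Nonempty :=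
    ⟨(Set.univ : Set V).ncard, Set.univ, rfl, fun v => .init trivial⟩
  have hczf_ne : {n | ∃ S : Set V, S.ncard = n ∧ T.IsConnForcingSet S}.Nonempty := by
    refine ⟨(Set.univ : Set V).ncard, Set.univ, rfl, fun v => .init trivial, ?_⟩
    exact ((induceUnivIso T).connected_iff).mpr hT.isConnected
  have hzf_pos : 1 ≤ T.zfNum := by
    by_contra h
    push_neg at h
    have h0 : T.zfNum = 0 := by omega
    have hmem : ∃ S : Set V, S.ncard = T.zfNum ∧ T.IsForcingSet S := Nat.sInf_mem hzf_ne
    obtain ⟨S, hS0, hSf⟩ := hmem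
    rw [h0] at hS0
    have hSe : S = ∅ := (Set.ncard_eq_zero S.toFinite).mp hS0
    obtain ⟨v⟩ := hne
    exact ZFAux.not_forced_empty (hSe ▸ hSf v)
  have hmemc : ∃ S : Set V, S.ncard = T.czfNum ∧ T.IsConnForcingSet S := Nat.sInf_mem hczf_ne
  obtain ⟨S, hScard, hSf, hSconn⟩ := hmemc
  have hzf_le : T.zfNum ≤ T.czfNum := hScard ▸ Nat.sInf_le ⟨S, rfl, hSf⟩
  constructor
  · intro h
    by_cases h2 : 2 ≤ S.ncard
    · exfalso
      obtain ⟨S', hS'f, hS'lt⟩ := ZFAux.exists_smaller hT hSf hSconn h2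
      have hle : T.zfNum ≤ S'.ncard := Nat.sInf_le ⟨S', rfl, hS'f⟩
      omega
    · have hpos : 1 ≤ S.ncard := by
        have hSne : S.Nonempty := by
          obtain ⟨⟨x, hx⟩⟩ := hSconn.nonempty
          exact ⟨x, hx⟩
        rw [← (Set.ncard_pos S.toFinite)] at hSne
        omega
      have h1 : S.ncard = 1 := by omega
      obtain ⟨v₀, rfl⟩ := Set.ncard_eq_one.mp h1
      exact ZFAux.singleton_path hT hSf
  · rintro ⟨n, ⟨e⟩⟩
    have hpos : 0 < n := (e.toEquiv (Classical.arbitrary V)).pos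
    set v₁ : V := e.symm ⟨0, hpos⟩ with hv₁
    have hstep : ∀ k : ℕ, ∀ hk : k < n, T.Forced {v₁} (e.symm ⟨k, hk⟩) := by
      intro k
      induction k using Nat.strong_induction_on with
      | _ k ih =>
        intro hk
        rcases Nat.eq_zero_or_pos k with rfl | hkpos
        · exact .init rfl
        · obtain ⟨k', rfl⟩ : ∃ k', k = k' + 1 := ⟨k - 1, by omega⟩
          refine .force (ih k' (by omega) (by omega)) ?_ ?_
          · rw [e.symm.map_adj_iff]
            rw [pathGraph_adj]
            exact Or.inl rfl
          · intro x hx hxne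
            have hx' : T.Adj (e.symm ⟨k', by omega⟩) (e.symm (e x)) := by
              rwa [e.symm_apply_apply]
            rw [e.symm.map_adj_iff, pathGraph_adj] at hx'
            rcases hx' with h' | h'
            · exfalso
              refine hxne ?_
              have : e x = ⟨k' + 1, hk⟩ := Fin.ext (by simpa using h'.symm)
              rw [← this, e.symm_apply_apply]
            · have h'' : (e x).val + 1 = k' := h'
              have hval : (e x).val = k' - 1 := by omega
              have hlt : (e x).val < n := (e x).isLt
              have hforc := ih (e x).val (by omega) hlt
              have hcast : (⟨(e x).val, hlt⟩ : Fin n) = e x := Fin.ext rfl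
              rw [hcast, e.symm_apply_apply] at hforc
              exact hforc
    have hforce : T.IsForcingSet {v₁} := by
      intro v
      have := hstep (e v).val (e v).isLt
      have hcast : (⟨(e v).val, (e v).isLt⟩ : Fin n) = e v := Fin.ext rfl
      rwa [hcast, e.symm_apply_apply] at this
    have hconn1 : (T.induce {v₁}).Connected := by
      haveI : Nonempty ({v₁} : Set V) := ⟨⟨v₁, rfl⟩⟩
      refine ⟨fun a b => ?_⟩
      have hab : a = b := Subtype.ext (a.2.trans b.2.symm)
      rw [hab]
    have hle1 : T.czfNum ≤ 1 :=
      Nat.sInf_le ⟨{v₁}, Set.ncard_singleton _, hforce, hconn1⟩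
    omega
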